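/- arXiv:1705.11002 — 2 statements merged into one kernel-verified Lean document; each statement's English description precedes it below -/
import Mathlib

section
/- The set F_P := {b ∈ F_Q : b = max_{lex} Γb}, consisting of the points of F_Q that are lexicographically highest (in Kac coordinates [b_0, b_1, …, b_n]) within their Γ-orbit, forms a fundamental domain of the extended dual affine Weyl group W_P^aff acting on ℝⁿ, i.e., F_P contains exactly one point from each W_P^aff-orbit. -/
open Pointwise


/-- The set F_P of points of the fundamental domain F_Q (of the normal
subgroup `N = W_Q^aff` of `G = W_P^aff`) that are highest, in the (lexicographic) linear
order on X, within their Γ-orbit, is a fundamental domain of the extended dual affine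
Weyl group G: it contains exactly one point from each G-orbit. -/
theorem stmt1 {G X : Type*} [Group G] [MulAction G X] [LinearOrder X]
    (N Γ' : Subgroup G) (hN : N.Normal) [Finite Γ']
    (hinf : N ⊓ Γ' = ⊥) (hsup : N ⊔ Γ' = ⊤)
    (FQ : Set X)
    (hfund : ∀ x : X, ∃! b, b ∈ FQ ∧ ∃ g ∈ N, g • x = b)
    (hΓ : ∀ γ ∈ Γ', ∀ b ∈ FQ, γ • b ∈ FQ) :
    ∀ x : X, ∃! b, (b ∈ FQ ∧ ∀ γ ∈ Γ', γ • b ≤ b) ∧ ∃ g : G, g • x = b := by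
  intro x
  obtain ⟨b₀, ⟨hb₀F, n₀, hn₀, hn₀x⟩, _⟩ := hfund x
  -- key characterization of FQ ∩ (G-orbit of x)
  have key : ∀ b : X, (b ∈ FQ ∧ ∃ g : G, g • x = b) ↔ ∃ γ ∈ Γ', γ • b₀ = b := by
    intro b
    constructor
    · rintro ⟨hbF, g, hgx⟩
      have hg : g ∈ (N : Set G) * (Γ' : Set G) := by
        rw [← Subgroup.normal_mul, hsup]; trivial
      obtain ⟨n, hn, γ, hγ, rfl⟩ := hg
      refine ⟨γ, hγ, ?_⟩
      have h1 : b ∈ FQ ∧ ∃ g ∈ N, g • (γ • x) = b := by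
        refine ⟨hbF, n, hn, ?_⟩
        rw [← mul_smul]; exact hgx
      have h2 : γ • b₀ ∈ FQ ∧ ∃ g ∈ N, g • (γ • x) = γ • b₀ := by
        refine ⟨hΓ γ hγ b₀ hb₀F, γ * n₀ * γ⁻¹, hN.conj_mem n₀ hn₀ γ, ?_⟩
        simp only [mul_smul, inv_smul_smul, hn₀x]
      exact (hfund (γ • x)).unique h2 h1
    · rintro ⟨γ, hγ, rfl⟩
      exact ⟨hΓ γ hγ b₀ hb₀F, γ * n₀, by rw [mul_smul, hn₀x]⟩
  -- the Γ'-orbit of b₀ is finite and nonempty; take its maximum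
  set S : Set X := Set.range (fun γ : Γ' => (γ : G) • b₀) with hS
  have hfin : S.Finite := Set.finite_range _
  have hne : S.Nonempty := ⟨b₀, ⟨1, one_smul G b₀⟩⟩
  obtain ⟨b, hbS, hbmax⟩ : ∃ b ∈ S, ∀ a ∈ S, b ≤ a → b = a := by
    obtain ⟨b, hb⟩ := hfin.exists_maximal hne
    exact ⟨b, hb.1, fun a ha h => le_antisymm h (hb.2 ha h)⟩
  have hle : ∀ a ∈ S, a ≤ b := by
    intro a ha
    rcases le_total a b with h | h
    · exact h
    · exact le_of_eq (hbmax a ha h).symm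
  obtain ⟨γ₀, hγ₀'⟩ := hbS
  have hγ₀ : (γ₀ : G) • b₀ = b := hγ₀'
  have hbmem : b ∈ FQ ∧ ∃ g : G, g • x = b :=
    (key b).mpr ⟨γ₀, γ₀.2, hγ₀⟩
  refine ⟨b, ⟨⟨hbmem.1, ?_⟩, hbmem.2⟩, ?_⟩
  · intro γ hγ
    apply hle
    refine ⟨⟨γ, hγ⟩ * γ₀, ?_⟩
    simp only [Subgroup.coe_mul, mul_smul, hγ₀]
  · rintro b' ⟨⟨hb'F, hb'max⟩, g', hg'⟩
    obtain ⟨γ₁, hγ₁, hγ₁b⟩ := (key b').mp ⟨hb'F, g', hg'⟩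
    have h1 : b ≤ b' := by
      have : ((γ₀ : G) * γ₁⁻¹) • b' = b := by
        rw [← hγ₁b, mul_smul, inv_smul_smul, hγ₀]
      calc b = ((γ₀ : G) * γ₁⁻¹) • b' := this.symm
        _ ≤ b' := hb'max _ (mul_mem γ₀.2 (inv_mem hγ₁))
    have h2 : b' ≤ b := hle b' ⟨⟨γ₁, hγ₁⟩, hγ₁b⟩
    exact le_antisymm h2 h1
end

section
/- Let σ be a sign homomorphism of the Weyl group W and let b' ∈ M(F_P ∖ F_P^σ), i.e., b'/M lies in the fundamental domain F_P but its stabilizer in W_P^aff contains an element with negative σ∘ψ̂ value. Then the Weyl orbit function vanishes at every point of the refined dual root lattice: φ^σ_{b'}(s) = 0 for all s ∈ (1/M)Q^∨. -/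
/-- if b' ∈ M(F_P ∖ F_P^σ), i.e. b'/M lies in the fundamental domain F_P
of W_P^aff and its stabilizer in W_P^aff contains an element T(p)w with σ(w) = -1, then
the Weyl orbit function φ^σ_{b'} vanishes at every point s of the refined dual root
lattice (1/M)Q^∨. -/
theorem stmt4 {n : ℕ} {W : Type*} [Group W] [Fintype W]
    (ρ : W →* (EuclideanSpace ℝ (Fin n) ≃ₗᵢ[ℝ] EuclideanSpace ℝ (Fin n)))
    (σ : W →* ℝˣ) (hσ : ∀ w : W, (σ w : ℝ) = 1 ∨ (σ w : ℝ) = -1)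
    (Qv P : AddSubgroup (EuclideanSpace ℝ (Fin n)))
    (hdual : ∀ p ∈ P, ∀ q ∈ Qv, ∃ z : ℤ, (inner ℝ p q : ℝ) = z)
    (hWP : ∀ (w : W), ∀ p ∈ P, ρ w p ∈ P)
    (M : ℕ) (hM : 0 < M)
    (FP : Set (EuclideanSpace ℝ (Fin n)))
    (hFP : ∀ x, ∃! c, c ∈ FP ∧ ∃ (w : W), ∃ p ∈ P, ρ w x + p = c)
    (b' : EuclideanSpace ℝ (Fin n))
    (hb' : (M : ℝ)⁻¹ • b' ∈ FP)
    (hneg : ∃ (w : W), ∃ p ∈ P, (σ w : ℝ) = -1 ∧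
      ρ w ((M : ℝ)⁻¹ • b') + p = (M : ℝ)⁻¹ • b')
    (s : EuclideanSpace ℝ (Fin n)) (hs : (M : ℝ) • s ∈ Qv) :
    ∑ w' : W, ((σ w' : ℝ) : ℂ) *
        Complex.exp (2 * Real.pi * Complex.I *
          ((inner ℝ (ρ w' b') s : ℝ) : ℂ)) = 0 := by

  obtain ⟨w, p, hpP, hσw, heq⟩ := hneg
  have hMne : (M : ℝ) ≠ 0 := by positivity
  have hwb : ρ w b' = b' - (M : ℝ) • p := by
    have h1 : ρ w ((M : ℝ)⁻¹ • b') = (M : ℝ)⁻¹ • ρ w b' := by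
      exact (ρ w).map_smul _ _
    rw [h1] at heq
    have h2 := congrArg (fun x => (M : ℝ) • x) heq
    simp only [smul_add, smul_inv_smul₀ hMne] at h2
    exact eq_sub_of_add_eq h2
  set S := ∑ w' : W, ((σ w' : ℝ) : ℂ) *
      Complex.exp (2 * Real.pi * Complex.I * ((inner ℝ (ρ w' b') s : ℝ) : ℂ)) with hS
  have key : S = -S := by
    calc S = ∑ w' : W, ((σ (w' * w) : ℝ) : ℂ) *
        Complex.exp (2 * Real.pi * Complex.I * ((inner ℝ (ρ (w' * w) b') s : ℝ) : ℂ)) :=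
          (Fintype.sum_equiv (Equiv.mulRight w) _ _ (fun w' => rfl)).symm
    _ = ∑ w' : W, -(((σ w' : ℝ) : ℂ) *
        Complex.exp (2 * Real.pi * Complex.I * ((inner ℝ (ρ w' b') s : ℝ) : ℂ))) := by
        refine Finset.sum_congr rfl fun w' _ => ?_
        obtain ⟨z, hz⟩ := hdual (ρ w' p) (hWP w' p hpP) ((M : ℝ) • s) hs
        rw [real_inner_smul_right] at hz
        have hρ : ρ (w' * w) b' = ρ w' b' - (M : ℝ) • ρ w' p := by
          rw [map_mul]
          show ρ w' (ρ w b') = _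
          rw [hwb, map_sub, (ρ w').map_smul]
        have hinner : (inner ℝ (ρ (w' * w) b') s : ℝ) = inner ℝ (ρ w' b') s - z := by
          rw [hρ, inner_sub_left, real_inner_smul_left, hz]
        have hσ' : ((σ (w' * w) : ℝ) : ℂ) = -((σ w' : ℝ) : ℂ) := by
          have : (σ (w' * w) : ℝ) = (σ w' : ℝ) * (σ w : ℝ) := by
            rw [map_mul]; rfl
          rw [this, hσw]; push_cast; ring
        rw [hσ', hinner]
        have harg : (2 * (Real.pi : ℂ) * Complex.I) *
            (((inner ℝ (ρ w' b') s - z : ℝ)) : ℂ) =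
            2 * (Real.pi : ℂ) * Complex.I * ((inner ℝ (ρ w' b') s : ℝ) : ℂ)
              + ((-z : ℤ) : ℂ) * (2 * (Real.pi : ℂ) * Complex.I) := by
          push_cast; ring
        rw [harg, Complex.exp_add, Complex.exp_int_mul_two_pi_mul_I, mul_one]
        ring
    _ = -S := by rw [← Finset.sum_neg_distrib]
  have h2 : (2 : ℂ) * S = 0 := by linear_combination key
  exact (mul_eq_zero.mp h2).resolve_left two_ne_zero
end
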